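/- Let R be a local ring. Then the ring T_2(R) of 2×2 upper triangular matrices over R is very clean if and only if the ring T_2(R[[x]]) of 2×2 upper triangular matrices over the power series ring R[[x]] is very clean. -/

import Mathlib

/-- An element `a` of a ring is *very clean* if there is an idempotent `e` commuting with `a`
such that `a - e` or `a + e` is a unit. -/
def IsVeryClean {R : Type*} [Ring R] (a : R) : Prop :=
  ∃ e : R, IsIdempotentElem e ∧ a * e = e * a ∧ (IsUnit (a - e) ∨ IsUnit (a + e))

/-- A ring is *very clean* if every element is very clean. -/
def VeryCleanRing (R : Type*) [Ring R] : Prop :=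
  ∀ a : R, IsVeryClean a

/-- An element `a` of a ring is *strongly clean* if there is an idempotent `e` commuting with `a`
such that `a - e` is a unit. -/
def IsStronglyClean {R : Type*} [Ring R] (a : R) : Prop :=
  ∃ e : R, IsIdempotentElem e ∧ a * e = e * a ∧ IsUnit (a - e)

/-- A ring is *strongly clean* if every element is strongly clean. -/
def StronglyCleanRing (R : Type*) [Ring R] : Prop :=
  ∀ a : R, IsStronglyClean a

/-- The ring `T₂(R)` of 2×2 upper triangular matrices over `R`,
as a subring of the full 2×2 matrix ring. -/
def T2 (R : Type*) [Ring R] : Subring (Matrix (Fin 2) (Fin 2) R) where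
  carrier := {A | A 1 0 = 0}
  zero_mem' := rfl
  one_mem' := Matrix.one_apply_ne (by decide)
  add_mem' := by
    intro A B hA hB
    simp only [Set.mem_setOf_eq] at *
    simp [Matrix.add_apply, hA, hB]
  neg_mem' := by
    intro A hA
    simp only [Set.mem_setOf_eq] at *
    simp [Matrix.neg_apply, hA]
  mul_mem' := by
    intro A B hA hB
    simp only [Set.mem_setOf_eq] at *
    simp [Matrix.mul_apply, Fin.sum_univ_two, hA, hB]

theorem mem_T2_iff {R : Type*} [Ring R] {A : Matrix (Fin 2) (Fin 2) R} :
    A ∈ T2 R ↔ A 1 0 = 0 := Iff.rfl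

section Aux
variable {S : Type*} [Ring S]

def mkT2 (a b d : S) : T2 S := ⟨!![a, b; 0, d], by simp [mem_T2_iff]⟩

@[simp] lemma mkT2_00 (a b d : S) : ((mkT2 a b d : T2 S) : Matrix (Fin 2) (Fin 2) S) 0 0 = a := rfl
@[simp] lemma mkT2_01 (a b d : S) : ((mkT2 a b d : T2 S) : Matrix (Fin 2) (Fin 2) S) 0 1 = b := rfl
@[simp] lemma mkT2_10 (a b d : S) : ((mkT2 a b d : T2 S) : Matrix (Fin 2) (Fin 2) S) 1 0 = 0 := rfl
@[simp] lemma mkT2_11 (a b d : S) : ((mkT2 a b d : T2 S) : Matrix (Fin 2) (Fin 2) S) 1 1 = d := rfl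

lemma isUnit_T2_iff {A : T2 S} :
    IsUnit A ↔ IsUnit ((A : Matrix (Fin 2) (Fin 2) S) 0 0) ∧
      IsUnit ((A : Matrix (Fin 2) (Fin 2) S) 1 1) := by
  constructor
  · rintro ⟨u, rfl⟩
    have h1 : ((↑u : T2 S) : Matrix (Fin 2) (Fin 2) S) * ((↑u⁻¹ : T2 S) : Matrix (Fin 2) (Fin 2) S) = 1 := by
      rw [← Subring.coe_mul, u.mul_inv]; rfl
    have h2 : ((↑u⁻¹ : T2 S) : Matrix (Fin 2) (Fin 2) S) * ((↑u : T2 S) : Matrix (Fin 2) (Fin 2) S) = 1 := by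
      rw [← Subring.coe_mul, u.inv_mul]; rfl
    have hu : ((↑u⁻¹ : T2 S) : Matrix (Fin 2) (Fin 2) S) 1 0 = 0 := (↑u⁻¹ : T2 S).2
    have hv : ((↑u : T2 S) : Matrix (Fin 2) (Fin 2) S) 1 0 = 0 := (↑u : T2 S).2
    have e1 := congrFun (congrFun h1 0) 0
    have e2 := congrFun (congrFun h2 0) 0
    have e3 := congrFun (congrFun h1 1) 1
    have e4 := congrFun (congrFun h2 1) 1
    rw [Matrix.mul_apply, Fin.sum_univ_two] at e1 e2 e3 e4
    simp only [hu, hv, mul_zero, zero_mul, add_zero, zero_add, Matrix.one_apply_eq] at e1 e2 e3 e4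
    exact ⟨⟨⟨_, _, e1, e2⟩, rfl⟩, ⟨⟨_, _, e3, e4⟩, rfl⟩⟩
  · rintro ⟨⟨ua, hua⟩, ⟨ud, hud⟩⟩
    have hM : (A : Matrix (Fin 2) (Fin 2) S) 1 0 = 0 := A.2
    refine ⟨⟨A, mkT2 (↑ua⁻¹) (-(↑ua⁻¹ * (A : Matrix (Fin 2) (Fin 2) S) 0 1 * ↑ud⁻¹)) (↑ud⁻¹),
      ?_, ?_⟩, rfl⟩
    · apply Subtype.ext
      show (A : Matrix (Fin 2) (Fin 2) S) * _ = 1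
      ext i j
      fin_cases i <;> fin_cases j <;>
        simp [Matrix.mul_apply, Fin.sum_univ_two, mkT2, hM, Matrix.one_apply, ← hua, ← hud,
          mul_assoc, Units.mul_inv_cancel_left, Units.inv_mul_cancel_left]
    · apply Subtype.ext
      show _ * (A : Matrix (Fin 2) (Fin 2) S) = 1
      ext i j
      fin_cases i <;> fin_cases j <;>
        simp [Matrix.mul_apply, Fin.sum_univ_two, mkT2, hM, Matrix.one_apply, ← hua, ← hud,
          mul_assoc, Units.mul_inv_cancel_left, Units.inv_mul_cancel_left]

lemma mkT2_eq_mkT2 {a b d a' b' d' : S} :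
    mkT2 a b d = mkT2 a' b' d' ↔ a = a' ∧ b = b' ∧ d = d' := by
  constructor
  · intro h
    exact ⟨congrFun (congrFun (congrArg Subtype.val h) 0) 0,
      congrFun (congrFun (congrArg Subtype.val h) 0) 1,
      congrFun (congrFun (congrArg Subtype.val h) 1) 1⟩
  · rintro ⟨rfl, rfl, rfl⟩; rfl

lemma eq_mkT2 (A : T2 S) :
    A = mkT2 ((A : Matrix (Fin 2) (Fin 2) S) 0 0) ((A : Matrix (Fin 2) (Fin 2) S) 0 1)
      ((A : Matrix (Fin 2) (Fin 2) S) 1 1) := by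
  have hM : (A : Matrix (Fin 2) (Fin 2) S) 1 0 = 0 := A.2
  apply Subtype.ext
  ext i j
  fin_cases i <;> fin_cases j <;> simp [mkT2, hM]

lemma mkT2_mul (a b d e c f : S) :
    mkT2 a b d * mkT2 e c f = mkT2 (a * e) (a * c + b * f) (d * f) := by
  apply Subtype.ext
  show _ * _ = _
  ext i j
  fin_cases i <;> fin_cases j <;> simp [mkT2, Matrix.mul_apply, Fin.sum_univ_two]

lemma mkT2_sub (a b d e c f : S) :
    mkT2 a b d - mkT2 e c f = mkT2 (a - e) (b - c) (d - f) := by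
  apply Subtype.ext
  show _ - _ = _
  ext i j
  fin_cases i <;> fin_cases j <;> simp [mkT2]

lemma mkT2_add (a b d e c f : S) :
    mkT2 a b d + mkT2 e c f = mkT2 (a + e) (b + c) (d + f) := by
  apply Subtype.ext
  show _ + _ = _
  ext i j
  fin_cases i <;> fin_cases j <;> simp [mkT2]

lemma mkT2_one : (1 : T2 S) = mkT2 1 0 1 := by
  apply Subtype.ext
  show (1 : Matrix (Fin 2) (Fin 2) S) = _
  ext i j
  fin_cases i <;> fin_cases j <;> simp [mkT2, Matrix.one_apply]

lemma mkT2_zero : (0 : T2 S) = mkT2 0 0 0 := by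
  apply Subtype.ext
  show (0 : Matrix (Fin 2) (Fin 2) S) = _
  ext i j
  fin_cases i <;> fin_cases j <;> simp [mkT2]

lemma isUnit_mkT2_iff {a b d : S} : IsUnit (mkT2 a b d) ↔ IsUnit a ∧ IsUnit d := by
  simpa using isUnit_T2_iff (A := mkT2 a b d)

end Aux


/-- Solvability condition 1. -/
def Cond1 (S : Type*) [Ring S] : Prop :=
  ∀ a d b : S, ¬IsUnit a → ¬IsUnit (d - 1) → ¬IsUnit (d + 1) → ∃ c, a * c - c * d = b

/-- Solvability condition 2. -/
def Cond2 (S : Type*) [Ring S] : Prop :=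
  ∀ a d b : S, ¬IsUnit (a - 1) → ¬IsUnit (a + 1) → ¬IsUnit d → ∃ c, a * c - c * d = b

section LocalChar
variable {S : Type*} [Ring S] [IsLocalRing S]

lemma isUnit_sub_one_of_nonunit {x : S} (h : ¬IsUnit x) : IsUnit (x - 1) := by
  have := IsLocalRing.isUnit_or_isUnit_of_add_one (a := x) (b := 1 - x) (by abel)
  rcases this with h' | h'
  · exact absurd h' h
  · simpa using h'.neg

lemma isUnit_add_one_of_nonunit {x : S} (h : ¬IsUnit x) : IsUnit (x + 1) := by
  have := IsLocalRing.isUnit_or_isUnit_of_add_one (a := x + 1) (b := -x) (by abel)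
  rcases this with h' | h'
  · exact h'
  · exact absurd (by simpa using h'.neg) h

lemma idem_zero_or_one {e : S} (he : e * e = e) : e = 0 ∨ e = 1 := by
  have := IsLocalRing.isUnit_or_isUnit_of_add_one (a := e) (b := 1 - e) (by abel)
  rcases this with h | h
  · right; exact h.mul_left_cancel (by rw [he, mul_one])
  · left
    have h2 : (1 - e) * e = (1 - e) * 0 := by rw [mul_zero, sub_mul, one_mul, he, sub_self]
    exact h.mul_left_cancel h2

lemma isVeryClean_mkT2_elim {a b d : S} (h : IsVeryClean (mkT2 a b d)) :
    ∃ e c f : S, (e * e = e ∧ e * c + c * f = c ∧ f * f = f) ∧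
      (a * e = e * a ∧ a * c + b * f = e * b + c * d ∧ d * f = f * d) ∧
      ((IsUnit (a - e) ∧ IsUnit (d - f)) ∨ (IsUnit (a + e) ∧ IsUnit (d + f))) := by
  obtain ⟨E, hE, hcomm, hunit⟩ := h
  rw [eq_mkT2 E] at hE hcomm hunit
  rw [IsIdempotentElem, mkT2_mul, mkT2_eq_mkT2] at hE
  rw [mkT2_mul, mkT2_mul, mkT2_eq_mkT2] at hcomm
  rw [mkT2_sub, mkT2_add, isUnit_mkT2_iff, isUnit_mkT2_iff] at hunit
  exact ⟨_, _, _, hE, hcomm, hunit⟩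

theorem T2_veryClean_iff_cond : VeryCleanRing (T2 S) ↔ Cond1 S ∧ Cond2 S := by
  constructor
  · intro h
    constructor
    · -- Cond1
      intro a d b ha hd1 hd2
      obtain ⟨e, c, f, hE, hcomm, hunit⟩ := isVeryClean_mkT2_elim (h (mkT2 a b d))
      have he01 := idem_zero_or_one hE.1
      have hf01 := idem_zero_or_one hE.2.2
      have hef : e = 1 ∧ f = 0 := by
        rcases hunit with ⟨hu1, hu2⟩ | ⟨hu1, hu2⟩ <;>
          rcases he01 with rfl | rfl <;> rcases hf01 with rfl | rfl <;> simp_all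
      obtain ⟨rfl, rfl⟩ := hef
      have h01 := hcomm.2.1
      rw [mul_zero, add_zero, one_mul] at h01
      exact ⟨c, by rw [h01, add_sub_cancel_right]⟩
    · -- Cond2
      intro a d b ha1 ha2 hd
      obtain ⟨e, c, f, hE, hcomm, hunit⟩ := isVeryClean_mkT2_elim (h (mkT2 a (-b) d))
      have he01 := idem_zero_or_one hE.1
      have hf01 := idem_zero_or_one hE.2.2
      have hef : e = 0 ∧ f = 1 := by
        rcases hunit with ⟨hu1, hu2⟩ | ⟨hu1, hu2⟩ <;>
          rcases he01 with rfl | rfl <;> rcases hf01 with rfl | rfl <;> simp_all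
      obtain ⟨rfl, rfl⟩ := hef
      have h01 := hcomm.2.1
      rw [mul_one, zero_mul, zero_add] at h01
      exact ⟨c, by rw [← h01]; abel⟩
  · rintro ⟨h1, h2⟩ A
    rw [eq_mkT2 A]
    set a := (A : Matrix (Fin 2) (Fin 2) S) 0 0 with ha_def
    set b := (A : Matrix (Fin 2) (Fin 2) S) 0 1 with hb_def
    set d := (A : Matrix (Fin 2) (Fin 2) S) 1 1 with hd_def
    by_cases ha : IsUnit a <;> by_cases hd : IsUnit d
    · -- both units : e = 0
      refine ⟨0, IsIdempotentElem.zero, by rw [mul_zero, zero_mul], Or.inl ?_⟩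
      rw [sub_zero, isUnit_mkT2_iff]
      exact ⟨ha, hd⟩
    · -- a unit, d not
      by_cases ha1 : IsUnit (a - 1)
      · refine ⟨1, IsIdempotentElem.one, by rw [mul_one, one_mul], Or.inl ?_⟩
        rw [mkT2_one, mkT2_sub, isUnit_mkT2_iff]
        exact ⟨ha1, isUnit_sub_one_of_nonunit hd⟩
      by_cases ha2 : IsUnit (a + 1)
      · refine ⟨1, IsIdempotentElem.one, by rw [mul_one, one_mul], Or.inr ?_⟩
        rw [mkT2_one, mkT2_add, isUnit_mkT2_iff]
        exact ⟨ha2, isUnit_add_one_of_nonunit hd⟩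
      · obtain ⟨c, hc⟩ := h2 a d (-b) ha1 ha2 hd
        -- a*c - c*d = -b, i.e. a*c + b = c*d
        have hcb : a * c + b = c * d := by
          have := hc
          rw [sub_eq_iff_eq_add] at this
          rw [this]; abel
        refine ⟨mkT2 0 c 1, ?_, ?_, Or.inl ?_⟩
        · rw [IsIdempotentElem, mkT2_mul, mkT2_eq_mkT2]
          refine ⟨by rw [mul_zero], by rw [zero_mul, mul_one, zero_add], by rw [mul_one]⟩
        · rw [mkT2_mul, mkT2_mul, mkT2_eq_mkT2]
          exact ⟨by rw [mul_zero, zero_mul], by rw [mul_one, zero_mul, zero_add, hcb],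
            by rw [mul_one, one_mul]⟩
        · rw [mkT2_sub, isUnit_mkT2_iff]
          exact ⟨by rw [sub_zero]; exact ha, isUnit_sub_one_of_nonunit hd⟩
    · -- d unit, a not
      by_cases hd1 : IsUnit (d - 1)
      · refine ⟨1, IsIdempotentElem.one, by rw [mul_one, one_mul], Or.inl ?_⟩
        rw [mkT2_one, mkT2_sub, isUnit_mkT2_iff]
        exact ⟨isUnit_sub_one_of_nonunit ha, hd1⟩
      by_cases hd2 : IsUnit (d + 1)
      · refine ⟨1, IsIdempotentElem.one, by rw [mul_one, one_mul], Or.inr ?_⟩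
        rw [mkT2_one, mkT2_add, isUnit_mkT2_iff]
        exact ⟨isUnit_add_one_of_nonunit ha, hd2⟩
      · obtain ⟨c, hc⟩ := h1 a d b ha hd1 hd2
        -- a*c - c*d = b, i.e. a*c = b + c*d
        have hcb : a * c = b + c * d := by rw [← hc]; abel
        refine ⟨mkT2 1 c 0, ?_, ?_, Or.inl ?_⟩
        · rw [IsIdempotentElem, mkT2_mul, mkT2_eq_mkT2]
          exact ⟨by rw [mul_one], by rw [one_mul, mul_zero, add_zero], by rw [mul_zero]⟩
        · rw [mkT2_mul, mkT2_mul, mkT2_eq_mkT2]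
          exact ⟨by rw [mul_one, one_mul], by rw [mul_zero, add_zero, one_mul, hcb],
            by rw [mul_zero, zero_mul]⟩
        · rw [mkT2_sub, isUnit_mkT2_iff]
          exact ⟨isUnit_sub_one_of_nonunit ha, by rw [sub_zero]; exact hd⟩
    · -- neither unit : e = 1
      refine ⟨1, IsIdempotentElem.one, by rw [mul_one, one_mul], Or.inl ?_⟩
      rw [mkT2_one, mkT2_sub, isUnit_mkT2_iff]
      exact ⟨isUnit_sub_one_of_nonunit ha, isUnit_sub_one_of_nonunit hd⟩

end LocalChar

open PowerSeries

section PS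
variable {R : Type*} [Ring R]

noncomputable def solveCoeff (a d : R⟦X⟧)
    (F : ∀ b0 : R, {y : R // constantCoeff a * y - y * constantCoeff d = b0})
    (b : R⟦X⟧) : ℕ → R
  | n => (F ((coeff n) b
        - ∑ j ∈ (Finset.range n).attach, (coeff (n - j.1)) a * solveCoeff a d F b j.1
        + ∑ j ∈ (Finset.range n).attach, solveCoeff a d F b j.1 * (coeff (n - j.1)) d)).1
  termination_by n => n
  decreasing_by all_goals exact Finset.mem_range.mp j.2

lemma solveCoeff_spec (a d : R⟦X⟧)
    (F : ∀ b0 : R, {y : R // constantCoeff a * y - y * constantCoeff d = b0})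
    (b : R⟦X⟧) (n : ℕ) :
    constantCoeff a * solveCoeff a d F b n - solveCoeff a d F b n * constantCoeff d
      = (coeff n) b - (∑ j ∈ Finset.range n, (coeff (n - j)) a * solveCoeff a d F b j)
        + ∑ j ∈ Finset.range n, solveCoeff a d F b j * (coeff (n - j)) d := by
  conv_lhs => rw [solveCoeff]
  rw [(F _).2, Finset.sum_attach _ (fun j => (coeff (n - j)) a * solveCoeff a d F b j),
    Finset.sum_attach _ (fun j => solveCoeff a d F b j * (coeff (n - j)) d)]

lemma key_solve (a d : R⟦X⟧)
    (H : ∀ b0 : R, ∃ y : R, constantCoeff a * y - y * constantCoeff d = b0)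
    (b : R⟦X⟧) : ∃ c : R⟦X⟧, a * c - c * d = b := by
  have F : ∀ b0 : R, {y : R // constantCoeff a * y - y * constantCoeff d = b0} :=
    fun b0 => Classical.indefiniteDescription _ (H b0)
  set g := solveCoeff a d F b with hg
  refine ⟨PowerSeries.mk g, ?_⟩
  ext n
  rw [map_sub, PowerSeries.coeff_mul, PowerSeries.coeff_mul]
  rw [Finset.Nat.sum_antidiagonal_eq_sum_range_succ (fun i j => (coeff i) a * (coeff j) (mk g)),
    Finset.Nat.sum_antidiagonal_eq_sum_range_succ (fun i j => (coeff i) (mk g) * (coeff j) d)]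
  simp only [PowerSeries.coeff_mk, Nat.succ_eq_add_one]
  have hrefl : ∑ x ∈ Finset.range (n + 1), (coeff x) a * g (n - x)
      = ∑ j ∈ Finset.range (n + 1), (coeff (n - j)) a * g j := by
    rw [← Finset.sum_range_reflect (fun x => (coeff x) a * g (n - x)) (n + 1)]
    apply Finset.sum_congr rfl
    intro x hx
    have hx' : x ≤ n := Nat.lt_succ_iff.mp (Finset.mem_range.mp hx)
    simp only [Nat.add_sub_cancel, Nat.sub_sub_self hx']
  rw [hrefl, Finset.sum_range_succ, Finset.sum_range_succ, Nat.sub_self,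
    PowerSeries.coeff_zero_eq_constantCoeff_apply]
  simp only [PowerSeries.coeff_zero_eq_constantCoeff_apply]
  have hs := solveCoeff_spec a d F b n
  rw [← hg] at hs
  have hrearr : ∀ X A Y B bn : R, A - B = bn - X + Y → (X + A) - (Y + B) = bn := by
    intro X A Y B bn h
    have : (X + A) - (Y + B) = (A - B) + X - Y := by abel
    rw [this, h]; abel
  exact hrearr _ _ _ _ _ hs
end PS

section Transfer
variable {R : Type*} [Ring R]

lemma isLocalRing_powerSeries [IsLocalRing R] : IsLocalRing R⟦X⟧ := by
  constructor
  intro a b hab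
  have hab0 : constantCoeff a + constantCoeff b = 1 := by
    have := congrArg (constantCoeff) hab
    simpa using this
  rcases IsLocalRing.isUnit_or_isUnit_of_add_one hab0 with h | h
  · exact Or.inl (PowerSeries.isUnit_iff_constantCoeff.mpr h)
  · exact Or.inr (PowerSeries.isUnit_iff_constantCoeff.mpr h)

lemma cond1_iff_powerSeries : Cond1 R ↔ Cond1 R⟦X⟧ := by
  constructor
  · intro h a d b ha hd1 hd2
    apply key_solve
    intro b0
    refine h _ _ b0 (fun hu => ha (PowerSeries.isUnit_iff_constantCoeff.mpr hu)) ?_ ?_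
    · intro hu
      exact hd1 (PowerSeries.isUnit_iff_constantCoeff.mpr (by rwa [map_sub, map_one]))
    · intro hu
      exact hd2 (PowerSeries.isUnit_iff_constantCoeff.mpr (by rwa [map_add, map_one]))
  · intro h a d b ha hd1 hd2
    obtain ⟨c, hc⟩ := h (PowerSeries.C a) (PowerSeries.C d) (PowerSeries.C b)
      (fun hu => ha (by simpa using PowerSeries.isUnit_iff_constantCoeff.mp hu))
      (fun hu => hd1 (by simpa using PowerSeries.isUnit_iff_constantCoeff.mp hu))
      (fun hu => hd2 (by simpa using PowerSeries.isUnit_iff_constantCoeff.mp hu))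
    refine ⟨constantCoeff c, ?_⟩
    have := congrArg (constantCoeff) hc
    simpa using this

lemma cond2_iff_powerSeries : Cond2 R ↔ Cond2 R⟦X⟧ := by
  constructor
  · intro h a d b ha1 ha2 hd
    apply key_solve
    intro b0
    refine h _ _ b0 ?_ ?_ (fun hu => hd (PowerSeries.isUnit_iff_constantCoeff.mpr hu))
    · intro hu
      exact ha1 (PowerSeries.isUnit_iff_constantCoeff.mpr (by rwa [map_sub, map_one]))
    · intro hu
      exact ha2 (PowerSeries.isUnit_iff_constantCoeff.mpr (by rwa [map_add, map_one]))
  · intro h a d b ha1 ha2 hd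
    obtain ⟨c, hc⟩ := h (PowerSeries.C a) (PowerSeries.C d) (PowerSeries.C b)
      (fun hu => ha1 (by simpa using PowerSeries.isUnit_iff_constantCoeff.mp hu))
      (fun hu => ha2 (by simpa using PowerSeries.isUnit_iff_constantCoeff.mp hu))
      (fun hu => hd (by simpa using PowerSeries.isUnit_iff_constantCoeff.mp hu))
    refine ⟨constantCoeff c, ?_⟩
    have := congrArg (constantCoeff) hc
    simpa using this

end Transfer

theorem T2_very_clean_iff_T2_powerSeries_very_clean (R : Type*) [Ring R] [IsLocalRing R] :
    VeryCleanRing (T2 R) ↔ VeryCleanRing (T2 (PowerSeries R)) := by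
  haveI := isLocalRing_powerSeries (R := R)
  rw [T2_veryClean_iff_cond, T2_veryClean_iff_cond, cond1_iff_powerSeries,
    cond2_iff_powerSeries]
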